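/- Let α and β be finite nonempty types, let ρ be a positive semidefinite complex matrix indexed by α × β, let φ : α → ℂ be any vector and τ : β → ℂ a unit vector (Σ_k |τ(k)|² = 1). Then (φ ⊗ τ)† ρ (φ ⊗ τ) ≤ Σ_{k ∈ β} (φ ⊗ e_k)† ρ (φ ⊗ e_k), where e_k : β → ℂ is the k-th standard basis vector and (φ ⊗ τ)(a,b) = φ(a)·τ(b). In particular, the fidelity of ρ with the product pure state φ ⊗ τ is at most the fidelity of the partial trace of ρ over β with φ. -/

import Mathlib

open scoped BigOperators
open Matrix ComplexOrder

private lemma key_cs {β : Type*} [Fintype β] (τ c : β → ℂ)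
    (hτ : ∑ k : β, Complex.normSq (τ k) = 1) :
    Complex.normSq (∑ k : β, τ k * c k) ≤ ∑ k : β, Complex.normSq (c k) := by
  have h1 : ‖∑ k : β, τ k * c k‖ ≤
      ∑ k : β, ‖τ k‖ * ‖c k‖ := by
    refine (norm_sum_le _ _).trans_eq ?_
    simp [norm_mul]
  have h2 : (∑ k : β, ‖τ k‖ * ‖c k‖) ^ 2 ≤
      (∑ k : β, ‖τ k‖ ^ 2) * ∑ k : β, ‖c k‖ ^ 2 :=
    Finset.sum_mul_sq_le_sq_mul_sq _ _ _
  have habs : ∀ z : ℂ, Complex.normSq z = ‖z‖ ^ 2 := fun z => by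
    rw [Complex.sq_norm]
  rw [habs]
  calc ‖∑ k : β, τ k * c k‖ ^ 2
      ≤ (∑ k : β, ‖τ k‖ * ‖c k‖) ^ 2 := by
        apply pow_le_pow_left₀ (norm_nonneg _) h1
    _ ≤ (∑ k : β, ‖τ k‖ ^ 2) * ∑ k : β, ‖c k‖ ^ 2 := h2
    _ = ∑ k : β, Complex.normSq (c k) := by
        simp_rw [← habs]; rw [hτ, one_mul]

private lemma quad_form_eq {n m : Type*} [Fintype n] [Fintype m]
    (B : Matrix m n ℂ) (v : n → ℂ) :
    (star v ⬝ᵥ (Bᴴ * B) *ᵥ v).re = ∑ i : m, Complex.normSq ((B *ᵥ v) i) := by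
  rw [← Matrix.mulVec_mulVec, Matrix.dotProduct_mulVec, ← Matrix.star_mulVec]
  rw [dotProduct, Complex.re_sum]
  refine Finset.sum_congr rfl fun i _ => ?_
  simp [Complex.normSq_apply, Complex.mul_re]

/-- for a positive semidefinite `ρ` on a bipartite system `α × β`, any
vector `φ` on `α` and any unit vector `τ` on `β`, the fidelity of `ρ` with the product
vector `φ ⊗ τ` is at most `Σ_k (φ ⊗ e_k)† ρ (φ ⊗ e_k)`, i.e., at most the fidelity of
the partial trace of `ρ` over `β` with `φ`. -/
theorem product_fidelity_le_partial_trace {α β : Type*}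
    [Fintype α] [Fintype β] [Nonempty α] [Nonempty β] [DecidableEq β]
    (ρ : Matrix (α × β) (α × β) ℂ) (hρ : ρ.PosSemidef)
    (φ : α → ℂ) (τ : β → ℂ) (hτ : ∑ k : β, Complex.normSq (τ k) = 1) :
    (star (fun p : α × β => φ p.1 * τ p.2) ⬝ᵥ
        ρ *ᵥ (fun p : α × β => φ p.1 * τ p.2)).re ≤
      ∑ k : β,
        (star (fun p : α × β => φ p.1 * (if p.2 = k then 1 else 0)) ⬝ᵥ
          ρ *ᵥ (fun p : α × β => φ p.1 * (if p.2 = k then 1 else 0))).re := by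
  obtain ⟨B, rfl⟩ : ∃ B : Matrix (α × β) (α × β) ℂ, ρ = Bᴴ * B := by
    classical
    open scoped MatrixOrder in exact CStarAlgebra.nonneg_iff_eq_star_mul_self.mp hρ.nonneg
  rw [quad_form_eq]
  have hrhs : ∀ k : β,
      (star (fun p : α × β => φ p.1 * (if p.2 = k then 1 else 0)) ⬝ᵥ
          (Bᴴ * B) *ᵥ (fun p : α × β => φ p.1 * (if p.2 = k then 1 else 0))).re
      = ∑ i : α × β, Complex.normSq
          ((B *ᵥ (fun p : α × β => φ p.1 * (if p.2 = k then 1 else 0))) i) :=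
    fun k => quad_form_eq B _
  simp_rw [hrhs]
  rw [Finset.sum_comm]
  refine Finset.sum_le_sum fun i _ => ?_
  have hdecomp : (B *ᵥ (fun p : α × β => φ p.1 * τ p.2)) i =
      ∑ k : β, τ k * (B *ᵥ (fun p : α × β => φ p.1 * (if p.2 = k then 1 else 0))) i := by
    simp only [Matrix.mulVec, dotProduct, Finset.mul_sum]
    rw [Finset.sum_comm]
    refine Finset.sum_congr rfl fun p _ => ?_
    simp only [mul_ite, mul_one, mul_zero, Finset.sum_ite_eq, Finset.sum_ite_eq',
      Finset.mem_univ, if_true]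
    ring
  rw [hdecomp]
  exact key_cs τ _ hτ
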